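/- Let k > 0 be a real number and define f(x) = tan(kx) − k·tanh(x). Then f is strictly increasing on each interval of (0, ∞) where tan(kx) is defined, f(x) > 0 for x ∈ (0, π/(2k)), f(x) < 0 for x ∈ (π/(2k), π/k], and f has a unique root in the interval (π/k, 3π/(2k)). -/

import Mathlib

open Real Set

lemma my_hasDerivAt_tanh (x : ℝ) : HasDerivAt Real.tanh (1 / Real.cosh x ^ 2) x := by
  have h := (Real.hasDerivAt_sinh x).div (Real.hasDerivAt_cosh x) (Real.cosh_pos x).ne'
  have he : (Real.cosh x * Real.cosh x - Real.sinh x * Real.sinh x) / Real.cosh x ^ 2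
      = 1 / Real.cosh x ^ 2 := by
    have := Real.cosh_sq_sub_sinh_sq x
    rw [show Real.cosh x * Real.cosh x - Real.sinh x * Real.sinh x
      = Real.cosh x ^ 2 - Real.sinh x ^ 2 by ring, this]
  rw [he] at h
  have : Real.tanh = fun y => Real.sinh y / Real.cosh y := funext fun y => Real.tanh_eq_sinh_div_cosh y
  rw [this]
  exact h

lemma tanh_pos' {x : ℝ} (hx : 0 < x) : 0 < Real.tanh x := by
  rw [Real.tanh_eq_sinh_div_cosh]
  exact div_pos (by rwa [Real.sinh_pos_iff]) (Real.cosh_pos x)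

lemma tanh_lt_one' (x : ℝ) : Real.tanh x < 1 := by
  rw [Real.tanh_eq_sinh_div_cosh, div_lt_one (Real.cosh_pos x), Real.sinh_eq, Real.cosh_eq]
  have := Real.exp_pos (-x)
  linarith

lemma tanh_strictMono : StrictMono Real.tanh :=
  strictMono_of_deriv_pos (fun x => by
    rw [(my_hasDerivAt_tanh x).deriv]
    positivity)

lemma f_hasDerivAt (k z : ℝ) (hcz : Real.cos (k * z) ≠ 0) :
    HasDerivAt (fun t => Real.tan (k * t) - k * Real.tanh t)
      (1 / Real.cos (k * z) ^ 2 * k - k * (1 / Real.cosh z ^ 2)) z := by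
  have h1 : HasDerivAt (fun t : ℝ => k * t) k z := by
    simpa using (hasDerivAt_id z).const_mul k
  have h2 := (Real.hasDerivAt_tan hcz).comp z h1
  exact h2.sub ((my_hasDerivAt_tanh z).const_mul k)

lemma f_mono (k : ℝ) (hk : 0 < k) (x y : ℝ) (hx : 0 < x) (hxy : x < y)
    (hcos : ∀ z ∈ Set.Icc x y, Real.cos (k * z) ≠ 0) :
    Real.tan (k * x) - k * Real.tanh x < Real.tan (k * y) - k * Real.tanh y := by
  have hmono : StrictMonoOn (fun t => Real.tan (k * t) - k * Real.tanh t) (Set.Icc x y) := by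
    apply strictMonoOn_of_deriv_pos (convex_Icc x y)
    · exact fun z hz => (f_hasDerivAt k z (hcos z hz)).continuousAt.continuousWithinAt
    · intro z hz
      rw [interior_Icc] at hz
      have hz0 : 0 < z := hx.trans hz.1
      rw [(f_hasDerivAt k z (hcos z ⟨hz.1.le, hz.2.le⟩)).deriv]
      have hc2 : 0 < Real.cos (k * z) ^ 2 :=
        pow_pos (abs_pos.mpr (hcos z ⟨hz.1.le, hz.2.le⟩)) 2 |>.trans_eq (by rw [sq_abs]) |>.trans_le le_rfl
      have hc2' : Real.cos (k * z) ^ 2 ≤ 1 := by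
        have := Real.neg_one_le_cos (k * z); have := Real.cos_le_one (k * z); nlinarith
      have hch : 1 < Real.cosh z ^ 2 := by
        have h := (Real.one_lt_cosh).mpr hz0.ne'
        nlinarith [Real.cosh_pos z]
      have h1 : k ≤ 1 / Real.cos (k * z) ^ 2 * k := by
        rw [one_div, inv_mul_eq_div, le_div_iff₀ hc2]; nlinarith
      have h2 : k * (1 / Real.cosh z ^ 2) < k := by
        rw [mul_one_div, div_lt_iff₀ (by positivity)]; nlinarith
      linarith
  exact hmono (Set.left_mem_Icc.mpr hxy.le) (Set.right_mem_Icc.mpr hxy.le) hxy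

lemma tanh_lt_self {x : ℝ} (hx : 0 < x) : Real.tanh x < x := by
  have hmono : StrictMonoOn (fun t => t - Real.tanh t) (Set.Icc 0 x) := by
    apply strictMonoOn_of_deriv_pos (convex_Icc 0 x)
    · exact fun z _ => ((hasDerivAt_id' z).sub (my_hasDerivAt_tanh z)).continuousAt.continuousWithinAt
    · intro z hz
      rw [interior_Icc] at hz
      rw [HasDerivAt.deriv (f := fun t => t - Real.tanh t) ((hasDerivAt_id' z).sub (my_hasDerivAt_tanh z))]
      have hch : 1 < Real.cosh z ^ 2 := by
        have h := (Real.one_lt_cosh).mpr hz.1.ne'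
        nlinarith [Real.cosh_pos z]
      have : 1 / Real.cosh z ^ 2 < 1 := by
        rw [div_lt_one (by positivity)]; exact hch
      linarith
  have := hmono (Set.left_mem_Icc.mpr hx.le) (Set.right_mem_Icc.mpr hx.le) hx
  simpa using this

theorem tan_sub_tanh_properties (k : ℝ) (hk : 0 < k) :
    (∀ x y : ℝ, 0 < x → x < y →
      (∀ z ∈ Set.Icc x y, Real.cos (k * z) ≠ 0) →
      Real.tan (k * x) - k * Real.tanh x < Real.tan (k * y) - k * Real.tanh y) ∧
    (∀ x ∈ Set.Ioo 0 (Real.pi / (2 * k)), 0 < Real.tan (k * x) - k * Real.tanh x) ∧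
    (∀ x ∈ Set.Ioc (Real.pi / (2 * k)) (Real.pi / k), Real.tan (k * x) - k * Real.tanh x < 0) ∧
    (∃! x : ℝ, x ∈ Set.Ioo (Real.pi / k) (3 * Real.pi / (2 * k)) ∧
      Real.tan (k * x) - k * Real.tanh x = 0) := by
  refine ⟨f_mono k hk, ?_, ?_, ?_⟩
  · -- positivity on (0, π/(2k))
    rintro x ⟨hx0, hx1⟩
    have hkx : k * x < Real.pi / 2 := by
      have := (mul_lt_mul_iff_right₀ hk).mpr hx1
      calc k * x < k * (Real.pi / (2 * k)) := this
        _ = Real.pi / 2 := by field_simp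
    have h1 : k * x < Real.tan (k * x) := Real.lt_tan (by positivity) hkx
    have h2 : Real.tanh x < x := tanh_lt_self hx0
    nlinarith
  · -- negativity on (π/(2k), π/k]
    rintro x ⟨hx0, hx1⟩
    have hxpos : 0 < x := lt_trans (by positivity) hx0
    have hkx0 : Real.pi / 2 < k * x := by
      have := (mul_lt_mul_iff_right₀ hk).mpr hx0
      calc Real.pi / 2 = k * (Real.pi / (2 * k)) := by field_simp
        _ < k * x := this
    have hkx1 : k * x ≤ Real.pi := by
      have := mul_le_mul_of_nonneg_left hx1 hk.le
      calc k * x ≤ k * (Real.pi / k) := this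
        _ = Real.pi := by field_simp
    have hsin : 0 ≤ Real.sin (k * x) :=
      Real.sin_nonneg_of_nonneg_of_le_pi (by positivity) hkx1
    have hcos : Real.cos (k * x) < 0 :=
      Real.cos_neg_of_pi_div_two_lt_of_lt hkx0 (by linarith [Real.pi_pos])
    have htan : Real.tan (k * x) ≤ 0 := by
      rw [Real.tan_eq_sin_div_cos]
      exact div_nonpos_of_nonneg_of_nonpos hsin hcos.le
    have := tanh_pos' hxpos
    nlinarith
  · -- unique root in (π/k, 3π/(2k))
    set c := k * Real.tanh (Real.pi / k) with hc
    have hpik : 0 < Real.pi / k := by positivity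
    have hcpos : 0 < c := mul_pos hk (tanh_pos' hpik)
    set a := (Real.pi + Real.arctan (c / 2)) / k with ha
    set b := (Real.pi + Real.arctan (k + 1)) / k with hb
    have harc1 : 0 < Real.arctan (c / 2) := by
      rw [← Real.arctan_zero]; exact Real.arctan_strictMono (by linarith)
    have harc2 : 0 < Real.arctan (k + 1) := by
      rw [← Real.arctan_zero]; exact Real.arctan_strictMono (by linarith)
    have harc1' : Real.arctan (c / 2) < Real.pi / 2 := Real.arctan_lt_pi_div_two _
    have harc2' : Real.arctan (k + 1) < Real.pi / 2 := Real.arctan_lt_pi_div_two _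
    have hca : c / 2 < k + 1 := by
      have := tanh_lt_one' (Real.pi / k)
      have : c < k := by rw [hc]; nlinarith
      linarith
    have hab : a < b := by
      rw [ha, hb, div_lt_div_iff₀ hk hk]
      have := Real.arctan_strictMono hca
      nlinarith
    have hka : k * a = Real.pi + Real.arctan (c / 2) := by rw [ha]; field_simp
    have hkb : k * b = Real.pi + Real.arctan (k + 1) := by rw [hb]; field_simp
    have hpia : Real.pi / k < a := by
      rw [ha, div_lt_div_iff₀ hk hk]; nlinarith [Real.pi_pos]
    have hb3 : b < 3 * Real.pi / (2 * k) := by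
      rw [hb, div_lt_div_iff₀ hk (by positivity)]; nlinarith [Real.pi_pos]
    have hapos : 0 < a := hpik.trans hpia
    -- cosine negative on [a,b]
    have hcosab : ∀ z ∈ Set.Icc a b, Real.cos (k * z) < 0 := by
      intro z hz
      apply Real.cos_neg_of_pi_div_two_lt_of_lt
      · have : k * a ≤ k * z := mul_le_mul_of_nonneg_left hz.1 hk.le
        nlinarith [Real.pi_pos]
      · have : k * z ≤ k * b := mul_le_mul_of_nonneg_left hz.2 hk.le
        nlinarith [Real.pi_pos]
    have hcont : ContinuousOn (fun t => Real.tan (k * t) - k * Real.tanh t) (Set.Icc a b) :=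
      fun z hz => (f_hasDerivAt k z (hcosab z hz).ne).continuousAt.continuousWithinAt
    have htana : Real.tan (k * a) = c / 2 := by
      rw [hka, add_comm, Real.tan_add_pi, Real.tan_arctan]
    have htanb : Real.tan (k * b) = k + 1 := by
      rw [hkb, add_comm, Real.tan_add_pi, Real.tan_arctan]
    have hfa : Real.tan (k * a) - k * Real.tanh a < 0 := by
      rw [htana]
      have h1 : Real.tanh (Real.pi / k) < Real.tanh a := tanh_strictMono hpia
      nlinarith
    have hfb : 0 < Real.tan (k * b) - k * Real.tanh b := by
      rw [htanb]
      have := tanh_lt_one' b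
      nlinarith
    obtain ⟨r, hr, hfr⟩ := intermediate_value_Icc hab.le hcont ⟨hfa.le, hfb.le⟩
    have hrmem : r ∈ Set.Ioo (Real.pi / k) (3 * Real.pi / (2 * k)) :=
      ⟨hpia.trans_le hr.1, hr.2.trans_lt hb3⟩
    -- uniqueness helper
    have key : ∀ p q : ℝ, p ∈ Set.Ioo (Real.pi / k) (3 * Real.pi / (2 * k)) →
        q ∈ Set.Ioo (Real.pi / k) (3 * Real.pi / (2 * k)) →
        Real.tan (k * p) - k * Real.tanh p = 0 → Real.tan (k * q) - k * Real.tanh q = 0 →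
        p = q := by
      have main : ∀ p q : ℝ, p ∈ Set.Ioo (Real.pi / k) (3 * Real.pi / (2 * k)) →
          q ∈ Set.Ioo (Real.pi / k) (3 * Real.pi / (2 * k)) → p < q →
          Real.tan (k * p) - k * Real.tanh p < Real.tan (k * q) - k * Real.tanh q := by
        intro p q hp hq hpq
        apply f_mono k hk p q (hpik.trans hp.1) hpq
        intro z hz
        apply ne_of_lt
        apply Real.cos_neg_of_pi_div_two_lt_of_lt
        · have h1 : Real.pi / k < z := hp.1.trans_le hz.1
          have := (mul_lt_mul_iff_right₀ hk).mpr h1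
          have he : k * (Real.pi / k) = Real.pi := by field_simp
          nlinarith [Real.pi_pos]
        · have h1 : z < 3 * Real.pi / (2 * k) := hz.2.trans_lt hq.2
          have := (mul_lt_mul_iff_right₀ hk).mpr h1
          have he : k * (3 * Real.pi / (2 * k)) = Real.pi + Real.pi / 2 := by field_simp; ring
          linarith
      intro p q hp hq hfp hfq
      rcases lt_trichotomy p q with h | h | h
      · exact absurd (main p q hp hq h) (by rw [hfp, hfq]; simp)
      · exact h
      · exact absurd (main q p hq hp h) (by rw [hfp, hfq]; simp)
    exact ⟨r, ⟨hrmem, hfr⟩, fun y hy => key y r hy.1 hrmem hy.2 hfr⟩
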